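/- arXiv:1709.06961 — 5 statements merged into one kernel-verified Lean document; each statement's English description precedes it below -/
import Mathlib

section
/- Let n ≥ 1 and let A and G be real symmetric positive definite n×n matrices. Denote by A^{1/2} and G^{1/2} their (unique) positive semidefinite square roots, by ‖·‖_F the Frobenius norm, and by λ_min the smallest eigenvalue of G. Then ‖A^{1/2} − G^{1/2}‖_F² ≤ ‖A − G‖_F² / λ_min. -/
open Matrix

open scoped MatrixOrder

lemma myTraceNonneg {m : Type*} [Fintype m] {M : Matrix m m ℝ} (hM : M.PosSemidef) :
    0 ≤ M.trace := by
  classical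
  rw [Matrix.trace]
  refine Finset.sum_nonneg fun i _ => ?_
  have := hM.diag_nonneg (i := i)
  simpa [Matrix.diag, Matrix.mulVec, dotProduct, Pi.single_apply] using this

lemma mySqrtSubSmul {m : Type*} [Fintype m] [DecidableEq m] {M : Matrix m m ℝ}
    (hM : M.PosSemidef) {c : ℝ}
    (hc : ∀ i, c ≤ Real.sqrt (hM.1.eigenvalues i)) :
    (CFC.sqrt M - c • 1).PosSemidef := by
  have hU : (hM.1.eigenvectorUnitary : Matrix m m ℝ) *
      (star hM.1.eigenvectorUnitary : Matrix m m ℝ) = 1 :=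
    (Unitary.mem_iff.mp hM.1.eigenvectorUnitary.2).2
  have key : CFC.sqrt M - c • 1 =
      (hM.1.eigenvectorUnitary : Matrix m m ℝ) *
        (Matrix.diagonal (Real.sqrt ∘ hM.1.eigenvalues) - c • 1) *
        (star hM.1.eigenvectorUnitary : Matrix m m ℝ) := by
    rw [CFC.sqrt_eq_cfc, cfc_nnreal_eq_real _ M hM.nonneg, hM.1.cfc_eq, IsHermitian.cfc,
      Unitary.conjStarAlgAut_apply, Matrix.mul_sub, Matrix.sub_mul]
    congr 1
    · congr 2
      ext i j
      simp [Matrix.diagonal_apply, hM.eigenvalues_nonneg]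
    rw [Matrix.mul_smul, Matrix.mul_one, Matrix.smul_mul, hU]
  rw [key]
  have hdiag : (Matrix.diagonal (Real.sqrt ∘ hM.1.eigenvalues) - c • (1 : Matrix m m ℝ)).PosSemidef := by
    have h1 : (c • (1 : Matrix m m ℝ)) = Matrix.diagonal (fun _ => c) := by
      ext i j
      simp [Matrix.diagonal_apply, Matrix.one_apply, mul_ite]
    rw [h1, Matrix.diagonal_sub]
    exact Matrix.posSemidef_diagonal_iff.mpr fun i => sub_nonneg.mpr (hc i)
  have := hdiag.mul_mul_conjTranspose_same (hM.1.eigenvectorUnitary : Matrix m m ℝ)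
  simpa [Matrix.star_eq_conjTranspose] using this

lemma myKey {m : Type*} [Fintype m] [DecidableEq m]
    (A G S T : Matrix m m ℝ) (hS : S.PosSemidef) (hT : T.PosSemidef)
    (hSS : S * S = A) (hTT : T * T = G) {lam : ℝ} (hlam : 0 < lam)
    (hTc : (T - Real.sqrt lam • 1).PosSemidef) :
    ∑ i, ∑ j, ((S - T) i j) ^ 2 ≤ (∑ i, ∑ j, ((A - G) i j) ^ 2) / lam := by
  obtain ⟨c, hcdef⟩ : ∃ c, c = Real.sqrt lam := ⟨_, rfl⟩
  rw [← hcdef] at hTc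
  have hcpos : 0 < c := hcdef ▸ Real.sqrt_pos.mpr hlam
  have hcsq : c ^ 2 = lam := hcdef ▸ Real.sq_sqrt hlam.le
  obtain ⟨E, hEdef⟩ : ∃ E, E = S - T := ⟨_, rfl⟩
  obtain ⟨F, hFdef⟩ : ∃ F, F = A - G := ⟨_, rfl⟩
  rw [← hEdef, ← hFdef]
  have hEh : E.IsHermitian := hEdef ▸ hS.1.sub hT.1
  have hFh : F.IsHermitian := by
    rw [hFdef, ← hSS, ← hTT]
    refine Matrix.IsHermitian.sub ?_ ?_
    · show (S * S)ᴴ = S * S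
      rw [Matrix.conjTranspose_mul, hS.1.eq]
    · show (T * T)ᴴ = T * T
      rw [Matrix.conjTranspose_mul, hT.1.eq]
  have hEsym : ∀ i j, E j i = E i j := fun i j => by simpa using hEh.apply i j
  have hFsym : ∀ i j, F j i = F i j := fun i j => by simpa using hFh.apply i j
  have hFdecomp : F = S * E + E * T := by
    rw [hFdef, hEdef, ← hSS, ← hTT, Matrix.mul_sub, Matrix.sub_mul]
    abel
  have tr1 : 0 ≤ (E * S * E).trace := by
    have h := hS.conjTranspose_mul_mul_same E
    rw [hEh.eq] at h
    exact myTraceNonneg h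
  have tr2 : c * (E * E).trace ≤ (E * T * E).trace := by
    have h := hTc.conjTranspose_mul_mul_same E
    rw [hEh.eq] at h
    have expand : E * (T - c • 1) * E = E * T * E - c • (E * E) := by
      rw [Matrix.mul_sub, Matrix.sub_mul, Matrix.mul_smul, Matrix.mul_one, Matrix.smul_mul]
    have h2 := myTraceNonneg h
    rw [expand, Matrix.trace_sub, Matrix.trace_smul, smul_eq_mul] at h2
    linarith
  have tr3 : (E * F).trace = (E * S * E).trace + (E * T * E).trace := by
    rw [hFdecomp, Matrix.mul_add, Matrix.trace_add]
    congr 1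
    · rw [Matrix.mul_assoc]
    · rw [Matrix.trace_mul_comm, Matrix.mul_assoc]
  have hcx : c * (E * E).trace ≤ (E * F).trace := by linarith
  have hE2 : (E * E).trace = ∑ i, ∑ j, (E i j) ^ 2 := by
    rw [Matrix.trace]
    refine Finset.sum_congr rfl fun i _ => ?_
    rw [Matrix.diag_apply, Matrix.mul_apply]
    refine Finset.sum_congr rfl fun j _ => ?_
    rw [hEsym j i]; ring
  have hEF : (E * F).trace = ∑ i, ∑ j, E i j * F i j := by
    rw [Matrix.trace]
    refine Finset.sum_congr rfl fun i _ => ?_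
    rw [Matrix.diag_apply, Matrix.mul_apply]
    refine Finset.sum_congr rfl fun j _ => ?_
    rw [hFsym j i]
  obtain ⟨x, hxdef⟩ : ∃ x, x = ∑ i, ∑ j, (E i j) ^ 2 := ⟨_, rfl⟩
  obtain ⟨y, hydef⟩ : ∃ y, y = ∑ i, ∑ j, (F i j) ^ 2 := ⟨_, rfl⟩
  obtain ⟨s, hsdef⟩ : ∃ s, s = ∑ i, ∑ j, E i j * F i j := ⟨_, rfl⟩
  rw [← hxdef, ← hydef]
  have hx : 0 ≤ x := hxdef ▸ Finset.sum_nonneg fun i _ => Finset.sum_nonneg fun j _ => sq_nonneg _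
  have hy : 0 ≤ y := hydef ▸ Finset.sum_nonneg fun i _ => Finset.sum_nonneg fun j _ => sq_nonneg _
  have cs : s ^ 2 ≤ x * y := by
    rw [hxdef, hydef, hsdef]
    have h := Finset.sum_mul_sq_le_sq_mul_sq Finset.univ
      (fun p : m × m => E p.1 p.2) (fun p : m × m => F p.1 p.2)
    simpa [Fintype.sum_prod_type] using h
  have hcx' : c * x ≤ s := by
    rw [hxdef, ← hE2, hsdef, ← hEF]; exact hcx
  rw [le_div_iff₀ hlam]
  have h4 : (c * x) ^ 2 ≤ s ^ 2 := pow_le_pow_left₀ (by positivity) hcx' 2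
  rcases hx.eq_or_lt with h0 | h0
  · rw [← h0, zero_mul]; exact hy
  · nlinarith [h4, cs, hcsq, mul_pos h0 h0]

/-- **Matrix square-root perturbation bound (Lemma CholEV).**
For real symmetric positive definite `n × n` matrices `A` and `G` (`n ≥ 1`), with `A^{1/2}`,
`G^{1/2}` their unique positive semidefinite square roots, `‖·‖_F` the Frobenius norm
(squared Frobenius norm written out as the sum of squares of entries), and `λ_min` the
smallest eigenvalue of `G`, we have
`‖A^{1/2} − G^{1/2}‖_F² ≤ ‖A − G‖_F² / λ_min`. -/
theorem sqrt_perturbation_frobenius_bound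
    {n : ℕ} (hn : 1 ≤ n) (A G : Matrix (Fin n) (Fin n) ℝ)
    (hA : A.PosDef) (hG : G.PosDef) :
    ∑ i, ∑ j, ((CFC.sqrt A - CFC.sqrt G) i j) ^ 2 ≤
      (∑ i, ∑ j, ((A - G) i j) ^ 2) / (⨅ i, hG.isHermitian.eigenvalues i) := by
  have hne : Nonempty (Fin n) := ⟨⟨0, hn⟩⟩
  have hlam : 0 < ⨅ i, hG.isHermitian.eigenvalues i := by
    obtain ⟨i, hi⟩ := exists_eq_ciInf_of_finite (f := hG.isHermitian.eigenvalues)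
    rw [← hi]
    exact hG.eigenvalues_pos i
  refine myKey A G _ _ (CFC.sqrt_nonneg A).posSemidef (CFC.sqrt_nonneg G).posSemidef
    (CFC.sqrt_mul_sqrt_self A hA.posSemidef.nonneg) (CFC.sqrt_mul_sqrt_self G hG.posSemidef.nonneg) hlam ?_
  refine mySqrtSubSmul hG.posSemidef fun i => ?_
  exact Real.sqrt_le_sqrt (ciInf_le (Finite.bddBelow_range _) i)
end

section
/- Let n ≥ 1, let M be a real symmetric positive semidefinite n×n matrix, and let a ≥ 0 be a real number such that M² − (2 + 2a²)·M + 4a²·I = 0, where I is the n×n identity matrix. Then the matrix N := (M + 2a·I) / (√2·(1 + a)) is symmetric positive semidefinite and satisfies N² = M; consequently N is the unique positive semidefinite square root of M. -/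
lemma psd_smul_aux {n : ℕ} {A : Matrix (Fin n) (Fin n) ℝ} (hA : A.PosSemidef)
    {c : ℝ} (hc : 0 ≤ c) : (c • A).PosSemidef := by
  refine ⟨?_, fun x => ?_⟩
  · unfold Matrix.IsHermitian
    rw [Matrix.conjTranspose_smul, hA.1.eq]
    simp
  · exact (hA.smul hc).2 x

/-- **Closed-form positive semidefinite square root.**
Let `M` be a real symmetric positive semidefinite `n × n` matrix (`n ≥ 1`) and `a ≥ 0` with
`M² − (2 + 2a²)·M + 4a²·I = 0`.  Then `N := (M + 2a·I) / (√2·(1 + a))` is symmetric positive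
semidefinite, satisfies `N² = M`, and is the unique positive semidefinite square root of `M`. -/
theorem closed_form_psd_sqrt
    {n : ℕ} (hn : 1 ≤ n) (M : Matrix (Fin n) (Fin n) ℝ) (hM : M.PosSemidef)
    (a : ℝ) (ha : 0 ≤ a)
    (hquad : M ^ 2 - (2 + 2 * a ^ 2) • M + (4 * a ^ 2) • (1 : Matrix (Fin n) (Fin n) ℝ) = 0) :
    letI N : Matrix (Fin n) (Fin n) ℝ :=
      (Real.sqrt 2 * (1 + a))⁻¹ • (M + (2 * a) • (1 : Matrix (Fin n) (Fin n) ℝ))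
    N.PosSemidef ∧ N ^ 2 = M ∧
      ∀ P : Matrix (Fin n) (Fin n) ℝ, P.PosSemidef → P ^ 2 = M → P = N := by
  set N : Matrix (Fin n) (Fin n) ℝ := (Real.sqrt 2 * (1 + a))⁻¹ • (M + (2 * a) • (1 : Matrix (Fin n) (Fin n) ℝ)) with hN
  have hs2 : (0:ℝ) < Real.sqrt 2 := Real.sqrt_pos.mpr (by norm_num)
  have h1a : (0:ℝ) < 1 + a := by linarith
  have hcpos : (0:ℝ) < Real.sqrt 2 * (1 + a) := mul_pos hs2 h1a
  have hNpsd : N.PosSemidef :=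
    psd_smul_aux (hM.add (psd_smul_aux Matrix.PosSemidef.one (by linarith)))
      (le_of_lt (inv_pos.mpr hcpos))
  have hsq2 : Real.sqrt 2 ^ 2 = 2 := Real.sq_sqrt (by norm_num)
  have hMsq : M ^ 2 = (2 + 2 * a ^ 2) • M - (4 * a ^ 2) • (1 : Matrix (Fin n) (Fin n) ℝ) := by
    have h := hquad
    rw [sub_add, sub_eq_zero] at h
    exact h
  have hNsq : N ^ 2 = M := by
    rw [hN]
    rw [smul_pow]
    have hexp : (M + (2*a) • (1 : Matrix (Fin n) (Fin n) ℝ)) ^ 2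
        = (2 * (1+a)^2) • M := by
      rw [sq]
      simp only [add_mul, mul_add, Matrix.mul_smul, Matrix.smul_mul, Matrix.mul_one,
        Matrix.one_mul, smul_smul]
      rw [← sq, hMsq]
      match_scalars <;> ring
    rw [hexp, smul_smul]
    have hval : (Real.sqrt 2 * (1 + a))⁻¹ ^ 2 * (2 * (1+a)^2) = 1 := by
      rw [inv_pow, mul_pow, hsq2]
      exact inv_mul_cancel₀ (by positivity)
    rw [hval, one_smul]
  refine ⟨hNpsd, hNsq, fun P hP hPsq => by
    open scoped MatrixOrder in
    rw [← CFC.sqrt_sq P hP.nonneg, hPsq, ← hNsq, CFC.sqrt_sq N hNpsd.nonneg]⟩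
end

section
/- Fix K ≥ 2, h > 0, a vector η ∈ ℝ^K with η_i ≥ 0 for all i, and a vector V ∈ ℝ^K. With H, S, Q, Q^{1/2}, Δw, Σ^Q_∞, Q̃, Σ_∞ defined as in the context, set a := √(1 + VᵀV) and B := Q̃·(Σ_∞ + 2a·I_L) / (√2·(1 + a)), where I_L is the L×L identity. Then B·Bᵀ = Σ^Q_∞, i.e., B is a Cholesky-type square root of the limiting covariance matrix Σ^Q_∞. -/
open Matrix Kronecker

/-- The set of strictly ordered index pairs `P = {(i,j) : 1 ≤ i < j ≤ K}`. -/
abbrev OrderedPairs (K : ℕ) : Type := {p : Fin K × Fin K // p.1 < p.2}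

/-- The selection matrix `H` picking the strictly upper-triangular coordinates:
`H_{p,q} = 1` if `q = p` and `0` otherwise. -/
noncomputable abbrev selH (K : ℕ) : Matrix (OrderedPairs K) (Fin K × Fin K) ℝ :=
  Matrix.of fun p q => if q = p.1 then 1 else 0

/-- The commutation matrix `S`: `S_{(i,j),(k,l)} = 1` if `(k,l) = (j,i)` and `0` otherwise. -/
noncomputable abbrev commS (K : ℕ) : Matrix (Fin K × Fin K) (Fin K × Fin K) ℝ :=
  Matrix.of fun p q => if q = p.swap then 1 else 0

variable {K : ℕ}

lemma commS_mul_apply {n : Type*} [Fintype n] (X : Matrix (Fin K × Fin K) n ℝ)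
    (p : Fin K × Fin K) (q : n) : (commS K * X) p q = X p.swap q := by
  simp [Matrix.mul_apply]

lemma mul_commS_apply {n : Type*} [Fintype n] (X : Matrix n (Fin K × Fin K) ℝ)
    (p : n) (q : Fin K × Fin K) : (X * commS K) p q = X p q.swap := by
  simp only [Matrix.mul_apply, Matrix.of_apply, mul_ite, mul_one, mul_zero]
  rw [Finset.sum_eq_single q.swap]
  · simp
  · rintro r - hr
    exact if_neg (fun hq => hr (by simp [hq]))
  · simp

lemma selH_mul_apply {n : Type*} [Fintype n] (X : Matrix (Fin K × Fin K) n ℝ)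
    (p : OrderedPairs K) (q : n) : (selH K * X) p q = X p.1 q := by
  simp [Matrix.mul_apply]

lemma mul_selHT_apply {n : Type*} [Fintype n] (X : Matrix n (Fin K × Fin K) ℝ)
    (p : n) (q : OrderedPairs K) : (X * (selH K)ᵀ) p q = X p q.1 := by
  simp [Matrix.mul_apply, Matrix.transpose_apply]

lemma selH_diag_selHT (d : Fin K × Fin K → ℝ) :
    selH K * Matrix.diagonal d * (selH K)ᵀ =
      Matrix.diagonal (fun p : OrderedPairs K => d p.1) := by
  ext p q
  rw [mul_selHT_apply, selH_mul_apply]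
  simp [Matrix.diagonal_apply, Subtype.ext_iff]

lemma diag_fst_mul_selH (d : Fin K × Fin K → ℝ) :
    Matrix.diagonal (fun p : OrderedPairs K => d p.1) * selH K
      = selH K * Matrix.diagonal d := by
  ext p q
  rw [Matrix.diagonal_mul, Matrix.mul_diagonal]
  by_cases hq : q = p.1 <;> simp [hq]

lemma selHT_mul_diag_fst (d : Fin K × Fin K → ℝ) :
    (selH K)ᵀ * Matrix.diagonal (fun p : OrderedPairs K => d p.1)
      = Matrix.diagonal d * (selH K)ᵀ := by
  have := congrArg Matrix.transpose (diag_fst_mul_selH (K := K) d)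
  simpa [Matrix.transpose_mul, Matrix.diagonal_transpose] using this

lemma commS_transpose : (commS K)ᵀ = commS K := by
  ext p q
  simp only [Matrix.transpose_apply, Matrix.of_apply]
  by_cases hp : p = q.swap
  · subst hp; simp
  · rw [if_neg hp, if_neg (fun hq => hp (by simp [hq]))]

lemma diag_comm_commS (d : Fin K × Fin K → ℝ) (hd : ∀ p, d p.swap = d p) :
    Matrix.diagonal d * commS K = commS K * Matrix.diagonal d := by
  ext p q
  rw [Matrix.diagonal_mul, Matrix.mul_diagonal]
  by_cases hq : q = p.swap
  · subst hq; simp [hd]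
  · simp [Matrix.of_apply, hq]

lemma selHT_mul_selH :
    (selH K)ᵀ * selH K =
      Matrix.diagonal (fun q : Fin K × Fin K => if q.1 < q.2 then (1 : ℝ) else 0) := by
  ext q r
  rw [Matrix.mul_apply, Matrix.diagonal_apply]
  by_cases hqr : q = r
  · subst hqr
    rw [if_pos rfl]
    by_cases h : q.1 < q.2
    · rw [if_pos h, Finset.sum_eq_single (⟨q, h⟩ : OrderedPairs K)]
      · simp
      · rintro ⟨p, hp⟩ - hne
        simp only [Matrix.transpose_apply, Matrix.of_apply]
        rw [if_neg (fun hq => hne (Subtype.ext hq.symm)), zero_mul]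
      · intro habs; exact absurd (Finset.mem_univ _) habs
    · rw [if_neg h, Finset.sum_eq_zero]
      rintro ⟨p, hp⟩ -
      simp only [Matrix.transpose_apply, Matrix.of_apply]
      rw [if_neg (fun hq => h (by rw [hq]; exact hp)), zero_mul]
  · rw [if_neg hqr, Finset.sum_eq_zero]
    rintro ⟨p, hp⟩ -
    simp only [Matrix.transpose_apply, Matrix.of_apply]
    rcases eq_or_ne q p with hq | hq
    · subst hq
      rw [if_neg (fun hr : r = q => hqr hr.symm), mul_zero]
    · rw [if_neg hq, zero_mul]


lemma one_sub_commS_sandwich :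
    (1 - commS K) * ((selH K)ᵀ * selH K) * (1 - commS K) = 1 - commS K := by
  rw [selHT_mul_selH]
  ext ⟨p1, p2⟩ ⟨q1, q2⟩
  simp only [Matrix.sub_mul, Matrix.mul_sub, Matrix.one_mul, Matrix.mul_one,
    Matrix.sub_apply, commS_mul_apply, mul_commS_apply, Matrix.one_apply,
    Matrix.diagonal_apply, Matrix.of_apply, Prod.swap_prod_mk, Prod.mk.injEq]
  split_ifs <;> (try (exfalso; omega)) <;> norm_num

lemma vecMulVec_sq (V : Fin K → ℝ) :
    Matrix.vecMulVec V V * Matrix.vecMulVec V V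
      = (∑ i, V i * V i) • Matrix.vecMulVec V V := by
  ext i j
  rw [Matrix.mul_apply, Matrix.smul_apply, Matrix.vecMulVec_apply, smul_eq_mul,
    Finset.sum_mul]
  exact Finset.sum_congr rfl fun k _ => by rw [Matrix.vecMulVec_apply, Matrix.vecMulVec_apply]; ring

lemma kronA_sq (V : Fin K → ℝ) :
    ((1 : Matrix (Fin K) (Fin K) ℝ) ⊗ₖ Matrix.vecMulVec V V) *
      ((1 : Matrix (Fin K) (Fin K) ℝ) ⊗ₖ Matrix.vecMulVec V V)
      = (∑ i, V i * V i) • ((1 : Matrix (Fin K) (Fin K) ℝ) ⊗ₖ Matrix.vecMulVec V V) := by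
  rw [← Matrix.mul_kronecker_mul, Matrix.one_mul, vecMulVec_sq, Matrix.kronecker_smul]

lemma kronA_transpose (V : Fin K → ℝ) :
    ((1 : Matrix (Fin K) (Fin K) ℝ) ⊗ₖ Matrix.vecMulVec V V)ᵀ
      = (1 : Matrix (Fin K) (Fin K) ℝ) ⊗ₖ Matrix.vecMulVec V V := by
  ext p q
  simp only [Matrix.transpose_apply, Matrix.kroneckerMap_apply, Matrix.one_apply,
    Matrix.vecMulVec_apply]
  by_cases hp : p.1 = q.1
  · rw [if_pos hp, if_pos hp.symm]; ring
  · rw [if_neg hp, if_neg (fun hh => hp hh.symm)]; ring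

lemma kronA_commS_kronA (V : Fin K → ℝ) :
    ((1 : Matrix (Fin K) (Fin K) ℝ) ⊗ₖ Matrix.vecMulVec V V) * commS K *
      ((1 : Matrix (Fin K) (Fin K) ℝ) ⊗ₖ Matrix.vecMulVec V V)
      = Matrix.vecMulVec (fun p : Fin K × Fin K => V p.1 * V p.2)
          (fun p : Fin K × Fin K => V p.1 * V p.2) := by
  ext p r
  rw [Matrix.mul_assoc, Matrix.mul_apply]
  simp only [commS_mul_apply]
  simp only [Matrix.kroneckerMap_apply, Matrix.one_apply, Matrix.vecMulVec_apply,
    Prod.fst_swap, Prod.snd_swap]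
  rw [Fintype.sum_prod_type]
  simp only [ite_mul, zero_mul, one_mul, mul_ite, mul_zero]
  simp only [Finset.sum_ite_eq, Finset.sum_ite_eq', Finset.mem_univ, if_true]
  ring

lemma commS_vecMulVec_w (V : Fin K → ℝ) :
    commS K * Matrix.vecMulVec (fun p : Fin K × Fin K => V p.1 * V p.2)
        (fun p : Fin K × Fin K => V p.1 * V p.2)
      = Matrix.vecMulVec (fun p : Fin K × Fin K => V p.1 * V p.2)
          (fun p : Fin K × Fin K => V p.1 * V p.2) := by
  ext p q
  rw [commS_mul_apply, Matrix.vecMulVec_apply, Matrix.vecMulVec_apply]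
  simp only [Prod.fst_swap, Prod.snd_swap]
  ring

lemma kronA_one_sub_commS_kronA (V : Fin K → ℝ) :
    ((1 : Matrix (Fin K) (Fin K) ℝ) ⊗ₖ Matrix.vecMulVec V V) * (1 - commS K) *
      ((1 : Matrix (Fin K) (Fin K) ℝ) ⊗ₖ Matrix.vecMulVec V V)
      = (∑ i, V i * V i) • ((1 : Matrix (Fin K) (Fin K) ℝ) ⊗ₖ Matrix.vecMulVec V V)
        - Matrix.vecMulVec (fun p : Fin K × Fin K => V p.1 * V p.2)
            (fun p : Fin K × Fin K => V p.1 * V p.2) := by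
  rw [Matrix.mul_sub, Matrix.mul_one, Matrix.sub_mul, kronA_sq, kronA_commS_kronA]

lemma one_sub_commS_vecMulVec_w (V : Fin K → ℝ) :
    (1 - commS K) * Matrix.vecMulVec (fun p : Fin K × Fin K => V p.1 * V p.2)
        (fun p : Fin K × Fin K => V p.1 * V p.2) = 0 := by
  rw [Matrix.sub_mul, Matrix.one_mul, commS_vecMulVec_w, sub_self]

lemma Msq (V : Fin K → ℝ) :
    (selH K * (1 - commS K) * ((1 : Matrix (Fin K) (Fin K) ℝ) ⊗ₖ Matrix.vecMulVec V V) *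
        (1 - commS K) * (selH K)ᵀ) *
      (selH K * (1 - commS K) * ((1 : Matrix (Fin K) (Fin K) ℝ) ⊗ₖ Matrix.vecMulVec V V) *
        (1 - commS K) * (selH K)ᵀ)
      = (∑ i, V i * V i) •
        (selH K * (1 - commS K) * ((1 : Matrix (Fin K) (Fin K) ℝ) ⊗ₖ Matrix.vecMulVec V V) *
          (1 - commS K) * (selH K)ᵀ) := by
  set H := selH K
  set S := commS K
  set A := (1 : Matrix (Fin K) (Fin K) ℝ) ⊗ₖ Matrix.vecMulVec V V with hA
  set w := fun p : Fin K × Fin K => V p.1 * V p.2 with hw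
  calc (H * (1 - S) * A * (1 - S) * Hᵀ) * (H * (1 - S) * A * (1 - S) * Hᵀ)
      = (H * (1 - S) * A) * ((1 - S) * (Hᵀ * H) * (1 - S)) * (A * (1 - S) * Hᵀ) := by
        simp only [Matrix.mul_assoc]
    _ = (H * (1 - S) * A) * (1 - S) * (A * (1 - S) * Hᵀ) := by
        rw [one_sub_commS_sandwich]
    _ = (H * (1 - S)) * (A * (1 - S) * A) * ((1 - S) * Hᵀ) := by
        simp only [Matrix.mul_assoc]
    _ = (H * (1 - S)) * ((∑ i, V i * V i) • A - Matrix.vecMulVec w w) * ((1 - S) * Hᵀ) := by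
        rw [kronA_one_sub_commS_kronA]
    _ = (∑ i, V i * V i) • (H * (1 - S) * A * (1 - S) * Hᵀ)
        - H * ((1 - S) * Matrix.vecMulVec w w) * ((1 - S) * Hᵀ) := by
        rw [Matrix.mul_sub, Matrix.sub_mul, Matrix.mul_smul, Matrix.smul_mul]
        simp only [Matrix.mul_assoc]
    _ = (∑ i, V i * V i) • (H * (1 - S) * A * (1 - S) * Hᵀ) := by
        rw [one_sub_commS_vecMulVec_w, Matrix.mul_zero, Matrix.zero_mul, sub_zero]

lemma sandwich_diag (d : Fin K × Fin K → ℝ) (hd : ∀ p, d p.swap = d p)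
    (A : Matrix (Fin K × Fin K) (Fin K × Fin K) ℝ) :
    Matrix.diagonal (fun p : OrderedPairs K => d p.1) *
        (selH K * (1 - commS K) * A * (1 - commS K) * (selH K)ᵀ) *
      Matrix.diagonal (fun p : OrderedPairs K => d p.1)
      = selH K * (1 - commS K) * (Matrix.diagonal d * A * Matrix.diagonal d) *
          (1 - commS K) * (selH K)ᵀ := by
  have hDS : Matrix.diagonal d * (1 - commS K) = (1 - commS K) * Matrix.diagonal d := by
    rw [Matrix.mul_sub, Matrix.sub_mul, Matrix.mul_one, Matrix.one_mul,
      diag_comm_commS d hd]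
  have mid : Matrix.diagonal d * ((1 - commS K) * A * (1 - commS K)) * Matrix.diagonal d
      = (1 - commS K) * (Matrix.diagonal d * A * Matrix.diagonal d) * (1 - commS K) := by
    calc Matrix.diagonal d * ((1 - commS K) * A * (1 - commS K)) * Matrix.diagonal d
        = (Matrix.diagonal d * (1 - commS K)) * A *
            ((1 - commS K) * Matrix.diagonal d) := by simp only [Matrix.mul_assoc]
      _ = ((1 - commS K) * Matrix.diagonal d) * A *
            ((1 - commS K) * Matrix.diagonal d) := by rw [hDS]
      _ = ((1 - commS K) * Matrix.diagonal d) * A *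
            (Matrix.diagonal d * (1 - commS K)) := by nth_rewrite 2 [← hDS]; rfl
      _ = (1 - commS K) * (Matrix.diagonal d * A * Matrix.diagonal d) * (1 - commS K) := by
          simp only [Matrix.mul_assoc]
  calc Matrix.diagonal (fun p : OrderedPairs K => d p.1) *
        (selH K * (1 - commS K) * A * (1 - commS K) * (selH K)ᵀ) *
      Matrix.diagonal (fun p : OrderedPairs K => d p.1)
      = (Matrix.diagonal (fun p : OrderedPairs K => d p.1) * selH K) *
          ((1 - commS K) * A * (1 - commS K)) *
          ((selH K)ᵀ * Matrix.diagonal (fun p : OrderedPairs K => d p.1)) := by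
        simp only [Matrix.mul_assoc]
    _ = (selH K * Matrix.diagonal d) * ((1 - commS K) * A * (1 - commS K)) *
          (Matrix.diagonal d * (selH K)ᵀ) := by
        rw [diag_fst_mul_selH, selHT_mul_diag_fst]
    _ = selH K * (Matrix.diagonal d * ((1 - commS K) * A * (1 - commS K)) *
          Matrix.diagonal d) * (selH K)ᵀ := by simp only [Matrix.mul_assoc]
    _ = selH K * ((1 - commS K) * (Matrix.diagonal d * A * Matrix.diagonal d) *
          (1 - commS K)) * (selH K)ᵀ := by rw [mid]
    _ = selH K * (1 - commS K) * (Matrix.diagonal d * A * Matrix.diagonal d) *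
          (1 - commS K) * (selH K)ᵀ := by simp only [Matrix.mul_assoc]

lemma kron_Q_dw (h : ℝ) (hh : 0 < h) (η V : Fin K → ℝ) (hη : ∀ i, 0 ≤ η i) :
    Matrix.diagonal η ⊗ₖ
        Matrix.vecMulVec (Real.sqrt h • (Matrix.diagonal fun i => Real.sqrt (η i)).mulVec V)
          (Real.sqrt h • (Matrix.diagonal fun i => Real.sqrt (η i)).mulVec V)
      = h • (Matrix.diagonal (fun q : Fin K × Fin K => Real.sqrt (η q.1) * Real.sqrt (η q.2)) *
          ((1 : Matrix (Fin K) (Fin K) ℝ) ⊗ₖ Matrix.vecMulVec V V) *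
          Matrix.diagonal (fun q : Fin K × Fin K => Real.sqrt (η q.1) * Real.sqrt (η q.2))) := by
  ext ⟨i, j⟩ ⟨k, l⟩
  rw [Matrix.smul_apply, Matrix.mul_diagonal, Matrix.diagonal_mul]
  simp only [Matrix.kroneckerMap_apply, Matrix.vecMulVec_apply, Matrix.one_apply,
    Pi.smul_apply, smul_eq_mul, Matrix.mulVec_diagonal]
  by_cases hik : i = k
  · subst hik
    rw [Matrix.diagonal_apply_eq, if_pos rfl]
    have e1 : Real.sqrt h * Real.sqrt h = h := Real.mul_self_sqrt hh.le
    have e2 : Real.sqrt (η i) * Real.sqrt (η i) = η i := Real.mul_self_sqrt (hη i)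
    linear_combination (η i * (Real.sqrt (η j) * V j) * (Real.sqrt (η l) * V l)) * e1 -
      (h * (Real.sqrt (η j) * V j) * (Real.sqrt (η l) * V l)) * e2
  · rw [Matrix.diagonal_apply_ne _ hik, if_neg hik]
    simp

/-- **Cholesky-type square root of the limiting covariance matrix `Σ^Q_∞`.**
Fix `K ≥ 2`, `h > 0`, `η ∈ ℝ^K` with nonnegative entries, and `V ∈ ℝ^K`.  With
`Q = diag(η)`, `Q^{1/2} = diag(√η)`, `Δw = √h·Q^{1/2}·V`,
`Σ^Q_∞ = 2·H·(Q ⊗ Q)·Hᵀ + (2/h)·H·(I − S)·(Q ⊗ (Δw·Δwᵀ))·(I − S)·Hᵀ`,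
`Q̃ = H·(Q^{1/2} ⊗ Q^{1/2})·Hᵀ`,
`Σ_∞ = 2·I_L + 2·H·(I − S)·(I_K ⊗ V·Vᵀ)·(I − S)·Hᵀ`, and `a = √(1 + VᵀV)`, the matrix
`B := Q̃·(Σ_∞ + 2a·I_L) / (√2·(1 + a))` satisfies `B·Bᵀ = Σ^Q_∞`. -/
theorem cholesky_sqrt_of_limiting_covariance
    (K : ℕ) (hK : 2 ≤ K) (h : ℝ) (hh : 0 < h)
    (η V : Fin K → ℝ) (hη : ∀ i, 0 ≤ η i) :
    letI Q : Matrix (Fin K) (Fin K) ℝ := Matrix.diagonal η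
    letI Qhalf : Matrix (Fin K) (Fin K) ℝ := Matrix.diagonal fun i => Real.sqrt (η i)
    letI Δw : Fin K → ℝ := Real.sqrt h • Qhalf.mulVec V
    letI SQinf : Matrix (OrderedPairs K) (OrderedPairs K) ℝ :=
      (2 : ℝ) • (selH K * (Q ⊗ₖ Q) * (selH K)ᵀ) +
        (2 / h) • (selH K * (1 - commS K) * (Q ⊗ₖ Matrix.vecMulVec Δw Δw) *
          (1 - commS K) * (selH K)ᵀ)
    letI Qt : Matrix (OrderedPairs K) (OrderedPairs K) ℝ :=
      selH K * (Qhalf ⊗ₖ Qhalf) * (selH K)ᵀ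
    letI Sinf : Matrix (OrderedPairs K) (OrderedPairs K) ℝ :=
      (2 : ℝ) • (1 : Matrix (OrderedPairs K) (OrderedPairs K) ℝ) +
        (2 : ℝ) • (selH K * (1 - commS K) *
          ((1 : Matrix (Fin K) (Fin K) ℝ) ⊗ₖ Matrix.vecMulVec V V) *
          (1 - commS K) * (selH K)ᵀ)
    letI a : ℝ := Real.sqrt (1 + ∑ i, V i * V i)
    letI B : Matrix (OrderedPairs K) (OrderedPairs K) ℝ :=
      (Real.sqrt 2 * (1 + a))⁻¹ •
        (Qt * (Sinf + (2 * a) • (1 : Matrix (OrderedPairs K) (OrderedPairs K) ℝ)))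
    B * Bᵀ = SQinf := by
  set s : ℝ := ∑ i, V i * V i with hs
  set a : ℝ := Real.sqrt (1 + s) with ha
  have hs0 : (0:ℝ) ≤ s := Finset.sum_nonneg fun i _ => mul_self_nonneg _
  have ha0 : 0 ≤ a := Real.sqrt_nonneg _
  have ha2 : a * a = 1 + s := Real.mul_self_sqrt (by linarith)
  have ha1 : (0:ℝ) < 1 + a := by linarith
  set A := (1 : Matrix (Fin K) (Fin K) ℝ) ⊗ₖ Matrix.vecMulVec V V with hAdef
  set M := selH K * (1 - commS K) * A * (1 - commS K) * (selH K)ᵀ with hMdef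
  set d : Fin K × Fin K → ℝ := fun q => Real.sqrt (η q.1) * Real.sqrt (η q.2) with hd
  have hdsym : ∀ p : Fin K × Fin K, d p.swap = d p := fun p => mul_comm _ _
  set Qt := selH K * (Matrix.diagonal (fun i => Real.sqrt (η i)) ⊗ₖ
      Matrix.diagonal (fun i => Real.sqrt (η i))) * (selH K)ᵀ with hQtdef
  set Δw : Fin K → ℝ := Real.sqrt h • (Matrix.diagonal fun i => Real.sqrt (η i)).mulVec V
    with hΔw
  set Y := (2:ℝ) • (1 : Matrix (OrderedPairs K) (OrderedPairs K) ℝ) + (2:ℝ) • M +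
      (2*a) • (1 : Matrix (OrderedPairs K) (OrderedPairs K) ℝ) with hYdef
  set c := Real.sqrt 2 * (1 + a) with hc
  have hQt : Qt = Matrix.diagonal (fun p : OrderedPairs K => d p.1) := by
    rw [hQtdef, Matrix.diagonal_kronecker_diagonal, selH_diag_selHT]
  have hQtT : Qtᵀ = Qt := by rw [hQt]; exact Matrix.diagonal_transpose _
  have hMT : Mᵀ = M := by
    rw [hMdef, hAdef]
    simp only [Matrix.transpose_mul, Matrix.transpose_sub, Matrix.transpose_one,
      commS_transpose, Matrix.transpose_transpose, kronA_transpose, Matrix.mul_assoc]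
  have hYT : Yᵀ = Y := by
    rw [hYdef]
    simp only [Matrix.transpose_add, Matrix.transpose_smul, Matrix.transpose_one, hMT]
  have hMsq : M * M = (a*a - 1) • M := by
    rw [hMdef, hAdef, Msq V, ← hs]
    congr 1
    linarith
  have hYY : Y * Y = ((2 + 2*a) * (2 + 2*a)) •
      ((1 : Matrix (OrderedPairs K) (OrderedPairs K) ℝ) + M) := by
    rw [hYdef]
    simp only [add_mul, mul_add, Matrix.smul_mul, Matrix.mul_smul, Matrix.one_mul,
      Matrix.mul_one, smul_smul, hMsq, smul_add]
    module
  have hcpos : (0:ℝ) < c := mul_pos (Real.sqrt_pos.mpr two_pos) ha1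
  have hcc : c * c = 2 * ((1+a)*(1+a)) := by
    have e2 : Real.sqrt 2 * Real.sqrt 2 = 2 := Real.mul_self_sqrt (by norm_num)
    rw [hc]
    linear_combination ((1+a)*(1+a)) * e2
  have hscal : c⁻¹ * c⁻¹ * ((2 + 2*a) * (2 + 2*a)) = 2 := by
    have h1 : (2 + 2*a) * (2 + 2*a) = 2 * (c * c) := by rw [hcc]; ring
    rw [h1]
    field_simp
  have step1 : (c⁻¹ • (Qt * Y)) * (c⁻¹ • (Qt * Y))ᵀ = (c⁻¹ * c⁻¹) • (Qt * (Y * Y) * Qt) := by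
    rw [Matrix.transpose_smul, Matrix.transpose_mul, hYT, hQtT,
      Matrix.smul_mul, Matrix.mul_smul, smul_smul]
    simp only [Matrix.mul_assoc]
  have step2 : Qt * (Y * Y) * Qt = ((2+2*a)*(2+2*a)) • (Qt * Qt + Qt * M * Qt) := by
    rw [hYY, Matrix.mul_smul, Matrix.smul_mul, Matrix.mul_add, Matrix.mul_one,
      Matrix.add_mul]
  have piece1 : Qt * Qt = selH K *
      (Matrix.diagonal η ⊗ₖ Matrix.diagonal η) * (selH K)ᵀ := by
    rw [hQt, Matrix.diagonal_mul_diagonal]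
    rw [Matrix.diagonal_kronecker_diagonal, selH_diag_selHT]
    have key : (fun p : OrderedPairs K => d p.1 * d p.1)
        = fun p : OrderedPairs K => η p.1.1 * η p.1.2 := by
      funext p
      have e1 := Real.mul_self_sqrt (hη p.1.1)
      have e2 := Real.mul_self_sqrt (hη p.1.2)
      rw [hd]
      linear_combination (Real.sqrt (η p.1.2) * Real.sqrt (η p.1.2)) * e1 + η p.1.1 * e2
    rw [key]
  have hQdw : Matrix.diagonal η ⊗ₖ Matrix.vecMulVec Δw Δw =
      h • (Matrix.diagonal d * A * Matrix.diagonal d) := by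
    rw [hΔw, hAdef, hd]
    exact kron_Q_dw h hh η V hη
  have piece3 : (2/h) • (selH K * (1 - commS K) * (Matrix.diagonal η ⊗ₖ Matrix.vecMulVec Δw Δw) *
      (1 - commS K) * (selH K)ᵀ) = (2:ℝ) • (Qt * M * Qt) := by
    rw [hQdw, Matrix.mul_smul, Matrix.smul_mul, Matrix.smul_mul, smul_smul,
      div_mul_cancel₀ (2:ℝ) hh.ne']
    rw [hQt, hMdef, ← sandwich_diag d hdsym A]
  rw [step1, step2, smul_smul, hscal, smul_add, piece1, ← piece3]
end

section
/- Fix K ≥ 2, h > 0, a vector V ∈ ℝ^K, and a vector η ∈ ℝ^K with η₁ ≥ η₂ ≥ … ≥ η_K ≥ 0. With H, S, Q, Q^{1/2}, Δw, Σ^Q_∞ defined as in the context, the matrix Σ^Q_∞ − 2·η_{K−1}·η_K·I_L is symmetric positive semidefinite; consequently every eigenvalue of Σ^Q_∞ is at least 2·η_{K−1}·η_K. -/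
open Matrix Kronecker

/-- Conjugating by the selection matrix is taking a principal submatrix. -/
lemma selH_conj {K : ℕ} (M : Matrix (Fin K × Fin K) (Fin K × Fin K) ℝ) :
    selH K * M * (selH K)ᵀ = M.submatrix Subtype.val Subtype.val := by
  ext p p'
  simp [Matrix.mul_apply, Matrix.transpose_apply, ite_mul, mul_ite]

/-- The commutation matrix is symmetric. -/
lemma commS_symm {K : ℕ} : (commS K)ᵀ = commS K := by
  ext p q
  simp only [Matrix.transpose_apply, Matrix.of_apply]
  have hiff : p = q.swap ↔ q = p.swap := by
    constructor <;> (intro hh; subst hh; simp)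
  simp [hiff]

/-- A nonnegative multiple of a positive semidefinite real matrix is positive semidefinite. -/
lemma psd_smul {n : Type*} [Fintype n] {M : Matrix n n ℝ} (hM : M.PosSemidef) {c : ℝ}
    (hc : 0 ≤ c) : (c • M).PosSemidef := by
  refine Matrix.PosSemidef.of_dotProduct_mulVec_nonneg ?_ (fun x => ?_)
  · unfold Matrix.IsHermitian at *
    rw [Matrix.conjTranspose_smul, hM.1]
    congr 1
  · rw [Matrix.smul_mulVec, dotProduct_smul]
    exact mul_nonneg hc (hM.dotProduct_mulVec_nonneg x)

/-- The Kronecker product of a nonnegative diagonal matrix with a rank-one square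
`v vᵀ` is positive semidefinite. -/
lemma psd_kron_diag_vv {n : Type*} [Fintype n] [DecidableEq n] (η : n → ℝ)
    (hnn : ∀ i, 0 ≤ η i) (v : n → ℝ) :
    ((Matrix.diagonal η) ⊗ₖ Matrix.vecMulVec v v).PosSemidef := by
  set D := Matrix.diagonal (fun i => Real.sqrt (η i)) with hDdef
  set C := Matrix.replicateCol Unit v with hCdef
  have hη : η = fun i => Real.sqrt (η i) * Real.sqrt (η i) :=
    funext fun i => (Real.mul_self_sqrt (hnn i)).symm
  have hD : Matrix.diagonal η = D * D := by
    rw [hDdef, Matrix.diagonal_mul_diagonal]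
    exact congrArg Matrix.diagonal hη
  have hC : Matrix.vecMulVec v v = C * Cᴴ := by
    rw [Matrix.vecMulVec_eq Unit, hCdef, Matrix.conjTranspose_replicateCol]
    simp
  rw [hD, hC, Matrix.mul_kronecker_mul]
  have hct : D ⊗ₖ Cᴴ = (D ⊗ₖ C)ᴴ := by
    ext ⟨i, j⟩ ⟨k, l⟩
    simp [hDdef, Matrix.diagonal_apply, Matrix.conjTranspose_apply]
    rcases eq_or_ne i k with rfl | hik
    · simp
    · simp [hik, Ne.symm hik]
  rw [hct]
  exact Matrix.posSemidef_self_mul_conjTranspose _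

/-- **Smallest-eigenvalue bound for `Σ^Q_∞`.**
Fix `K ≥ 2`, `h > 0`, `V ∈ ℝ^K`, and `η ∈ ℝ^K` with `η₁ ≥ η₂ ≥ … ≥ η_K ≥ 0`.  With
`Q = diag(η)`, `Q^{1/2} = diag(√η)`, `Δw = √h·Q^{1/2}·V`, and
`Σ^Q_∞ = 2·H·(Q ⊗ Q)·Hᵀ + (2/h)·H·(I − S)·(Q ⊗ (Δw·Δwᵀ))·(I − S)·Hᵀ`,
the matrix `Σ^Q_∞ − 2·η_{K−1}·η_K·I_L` is symmetric positive semidefinite; consequently every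
eigenvalue of `Σ^Q_∞` is at least `2·η_{K−1}·η_K`. -/
theorem limiting_covariance_smallest_eigenvalue_bound
    (K : ℕ) (hK : 2 ≤ K) (h : ℝ) (hh : 0 < h) (V η : Fin K → ℝ)
    (hmono : ∀ i j : Fin K, i ≤ j → η j ≤ η i) (hnonneg : ∀ i, 0 ≤ η i) :
    letI Q : Matrix (Fin K) (Fin K) ℝ := Matrix.diagonal η
    letI Qhalf : Matrix (Fin K) (Fin K) ℝ := Matrix.diagonal fun i => Real.sqrt (η i)
    letI Δw : Fin K → ℝ := Real.sqrt h • Qhalf.mulVec V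
    letI SQinf : Matrix (OrderedPairs K) (OrderedPairs K) ℝ :=
      (2 : ℝ) • (selH K * (Q ⊗ₖ Q) * (selH K)ᵀ) +
        (2 / h) • (selH K * (1 - commS K) * (Q ⊗ₖ Matrix.vecMulVec Δw Δw) *
          (1 - commS K) * (selH K)ᵀ)
    letI ηKm1 : ℝ := η ⟨K - 2, by omega⟩
    letI ηK : ℝ := η ⟨K - 1, by omega⟩
    (SQinf - (2 * ηKm1 * ηK) • (1 : Matrix (OrderedPairs K) (OrderedPairs K) ℝ)).PosSemidef ∧
      ∀ (μ : ℝ) (x : OrderedPairs K → ℝ), x ≠ 0 → SQinf.mulVec x = μ • x →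
        2 * ηKm1 * ηK ≤ μ := by
  have hK2 : K - 2 < K := by omega
  have hK1 : K - 1 < K := by omega
  set Q : Matrix (Fin K) (Fin K) ℝ := Matrix.diagonal η with hQ
  set Δw : Fin K → ℝ :=
    Real.sqrt h • (Matrix.diagonal fun i => Real.sqrt (η i)).mulVec V with hΔw
  set c : ℝ := 2 * η ⟨K - 2, hK2⟩ * η ⟨K - 1, hK1⟩ with hcdef
  set SQinf : Matrix (OrderedPairs K) (OrderedPairs K) ℝ :=
      (2 : ℝ) • (selH K * (Q ⊗ₖ Q) * (selH K)ᵀ) +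
        (2 / h) • (selH K * (1 - commS K) * (Q ⊗ₖ Matrix.vecMulVec Δw Δw) *
          (1 - commS K) * (selH K)ᵀ) with hSQ
  -- the key positive semidefiniteness statement
  have key : (SQinf - c • (1 : Matrix (OrderedPairs K) (OrderedPairs K) ℝ)).PosSemidef := by
    have e1 : selH K * (Q ⊗ₖ Q) * (selH K)ᵀ =
        (Q ⊗ₖ Q).submatrix Subtype.val Subtype.val := selH_conj _
    have e2 : selH K * (1 - commS K) * (Q ⊗ₖ Matrix.vecMulVec Δw Δw) *
          (1 - commS K) * (selH K)ᵀ =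
        ((1 - commS K) * (Q ⊗ₖ Matrix.vecMulVec Δw Δw) * (1 - commS K)).submatrix
          Subtype.val Subtype.val := by
      rw [← selH_conj]
      simp only [Matrix.mul_assoc]
    have hsplit : SQinf - c • (1 : Matrix (OrderedPairs K) (OrderedPairs K) ℝ) =
        (Matrix.diagonal (fun p : OrderedPairs K => 2 * (η p.1.1 * η p.1.2) - c)) +
          (2 / h) • (((1 - commS K) * (Q ⊗ₖ Matrix.vecMulVec Δw Δw) *
            (1 - commS K)).submatrix Subtype.val Subtype.val) := by
      rw [hSQ, e1, e2, add_sub_right_comm]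
      congr 1
      rw [hQ, Matrix.diagonal_kronecker_diagonal]
      ext p p'
      rcases eq_or_ne p p' with rfl | hne
      · simp [Matrix.diagonal_apply_eq, Matrix.one_apply_eq]
      · have hv : (p : Fin K × Fin K) ≠ (p' : Fin K × Fin K) :=
          fun hhh => hne (Subtype.ext hhh)
        simp [Matrix.diagonal_apply_ne _ hne, Matrix.diagonal_apply_ne _ hv,
          Matrix.one_apply_ne hne]
    rw [hsplit]
    have hpsd1 : (Matrix.diagonal
        (fun p : OrderedPairs K => 2 * (η p.1.1 * η p.1.2) - c)).PosSemidef := by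
      rw [Matrix.posSemidef_diagonal_iff]
      intro p
      have hlt : (p.1.1 : ℕ) < (p.1.2 : ℕ) := p.2
      have h2 : (p.1.2 : ℕ) ≤ K - 1 := by have := p.1.2.isLt; omega
      have h1 : (p.1.1 : ℕ) ≤ K - 2 := by have := p.1.2.isLt; omega
      have hm1 : η ⟨K - 2, hK2⟩ ≤ η p.1.1 :=
        hmono p.1.1 ⟨K - 2, hK2⟩ (by simpa [Fin.le_def] using h1)
      have hm2 : η ⟨K - 1, hK1⟩ ≤ η p.1.2 :=
        hmono p.1.2 ⟨K - 1, hK1⟩ (by simpa [Fin.le_def] using h2)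
      have hprod : η ⟨K - 2, hK2⟩ * η ⟨K - 1, hK1⟩ ≤ η p.1.1 * η p.1.2 :=
        mul_le_mul hm1 hm2 (hnonneg _) (le_trans (hnonneg _) hm1)
      rw [hcdef]
      nlinarith
    have hpsd2 : ((2 / h) • (((1 - commS K) * (Q ⊗ₖ Matrix.vecMulVec Δw Δw) *
        (1 - commS K)).submatrix (Subtype.val : OrderedPairs K → Fin K × Fin K)
          Subtype.val)).PosSemidef := by
      have hm : (Q ⊗ₖ Matrix.vecMulVec Δw Δw).PosSemidef := by
        rw [hQ]; exact psd_kron_diag_vv η hnonneg Δw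
      have hconj := hm.mul_mul_conjTranspose_same (1 - commS K)
      have hS : (1 - commS K)ᴴ = 1 - commS K := by
        rw [Matrix.conjTranspose_eq_transpose_of_trivial, Matrix.transpose_sub,
          Matrix.transpose_one, commS_symm]
      rw [hS] at hconj
      exact psd_smul (hconj.submatrix Subtype.val) (by positivity)
    exact hpsd1.add hpsd2
  refine ⟨key, fun μ x hx heig => ?_⟩
  have h0 := key.dotProduct_mulVec_nonneg x
  have hstar : star x = x := rfl
  have hmv : (SQinf - c • (1 : Matrix (OrderedPairs K) (OrderedPairs K) ℝ)).mulVec x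
      = (μ - c) • x := by
    rw [Matrix.sub_mulVec, heig, Matrix.smul_mulVec, Matrix.one_mulVec, sub_smul]
  rw [hstar, hmv] at h0
  have hdot : x ⬝ᵥ (μ - c) • x = (μ - c) * (x ⬝ᵥ x) := by
    rw [dotProduct_smul]
    rfl
  rw [hdot] at h0
  have hxx : 0 < x ⬝ᵥ x := by
    have := (Matrix.dotProduct_self_star_pos_iff (v := x)).mpr hx
    rwa [hstar] at this
  nlinarith
end

section
/- For every natural number D ≥ 1, the series ∑_{r=D+1}^{∞} 1/r² and ∑_{r=D+1}^{∞} 1/r⁴ satisfy (∑_{r=D+1}^{∞} 1/r⁴) ≤ (2/(3D²))·(∑_{r=D+1}^{∞} 1/r²). -/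
open Filter Topology

private lemma tsum_telescope_eq (f : ℕ → ℝ) (h0 : Tendsto f atTop (𝓝 0))
    (hs : Summable fun n => f n - f (n + 1)) :
    (∑' n, (f n - f (n + 1))) = f 0 := by
  have h := hs.hasSum.tendsto_sum_nat
  have h2 : Tendsto (fun n => f 0 - f n) atTop (𝓝 (f 0 - 0)) :=
    tendsto_const_nhds.sub h0
  rw [sub_zero] at h2
  have heq : (fun n => ∑ i ∈ Finset.range n, (f i - f (i + 1))) = fun n => f 0 - f n := by
    funext n
    exact Finset.sum_range_sub' f n
  rw [heq] at h
  exact tendsto_nhds_unique h h2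

private lemma summable_shift (p m : ℕ) (hp : 1 < p) :
    Summable fun k : ℕ => 1 / ((k : ℝ) + m) ^ p := by
  have h : Summable fun n : ℕ => 1 / (n : ℝ) ^ p := Real.summable_one_div_nat_pow.2 hp
  have := (summable_nat_add_iff m).2 h
  refine this.congr fun n => ?_
  push_cast
  ring_nf

private lemma key4 (x : ℝ) (hx : 1 ≤ x) :
    1 / (x + 1) ^ 4 ≤ 1 / (3 * x ^ 3) - 1 / (3 * (x + 1) ^ 3) := by
  have hx0 : (0 : ℝ) < x := lt_of_lt_of_le one_pos hx
  have hx1 : (0 : ℝ) < x + 1 := by linarith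
  rw [div_sub_div _ _ (by positivity) (by positivity),
    div_le_div_iff₀ (by positivity) (by positivity)]
  nlinarith [pow_pos hx0 3, pow_pos hx1 3, sq_nonneg x, mul_pos hx0 hx1,
    pow_pos hx0 2, pow_pos hx1 2, pow_pos (mul_pos hx0 hx1) 2]

private lemma key2 (x : ℝ) (hx : 0 ≤ x) :
    1 / (x + 1) - 1 / (x + 2) ≤ 1 / (x + 1) ^ 2 := by
  have hx1 : (0 : ℝ) < x + 1 := by linarith
  have hx2 : (0 : ℝ) < x + 2 := by linarith
  rw [div_sub_div _ _ (by positivity) (by positivity),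
    div_le_div_iff₀ (by positivity) (by positivity)]
  nlinarith

/-- **Tail-sum ratio bound.**
For every natural number `D ≥ 1`,
`∑_{r=D+1}^{∞} 1/r⁴ ≤ (2/(3D²))·∑_{r=D+1}^{∞} 1/r²`
(the tails are written as sums over `r = D + 1 + k`, `k ∈ ℕ`). -/
theorem tail_sum_ratio_bound (D : ℕ) (hD : 1 ≤ D) :
    (∑' k : ℕ, 1 / ((k : ℝ) + D + 1) ^ 4) ≤
      2 / (3 * (D : ℝ) ^ 2) * ∑' k : ℕ, 1 / ((k : ℝ) + D + 1) ^ 2 := by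
  have hD1 : (1 : ℝ) ≤ (D : ℝ) := by exact_mod_cast hD
  have hDpos : (0 : ℝ) < D := by linarith
  -- summability facts
  have hsum2 : Summable fun k : ℕ => 1 / ((k : ℝ) + D + 1) ^ 2 := by
    have := summable_shift 2 (D + 1) (by norm_num)
    refine this.congr fun n => ?_
    push_cast; ring_nf
  have hsum4 : Summable fun k : ℕ => 1 / ((k : ℝ) + D + 1) ^ 4 := by
    have := summable_shift 4 (D + 1) (by norm_num)
    refine this.congr fun n => ?_
    push_cast; ring_nf
  have hsum3 : Summable fun k : ℕ => 1 / (3 * ((k : ℝ) + D) ^ 3) := by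
    have h3 : Summable fun k : ℕ => 1 / ((k : ℝ) + D) ^ 3 := summable_shift 3 D (by norm_num)
    have := h3.mul_left (1 / 3)
    refine this.congr fun n => ?_
    field_simp
  -- telescoping function for the lower bound on the degree-2 tail
  have hfpos : ∀ k : ℕ, (0 : ℝ) < (k : ℝ) + D + 1 := fun k => by positivity
  have hftend : Tendsto (fun k : ℕ => 1 / ((k : ℝ) + D + 1)) atTop (𝓝 0) := by
    simp only [one_div]
    exact Tendsto.comp tendsto_inv_atTop_zero
      (tendsto_atTop_add_const_right _ _
        (tendsto_atTop_add_const_right _ _ tendsto_natCast_atTop_atTop))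
  have hfle : ∀ k : ℕ,
      (1 / ((k : ℝ) + D + 1) - 1 / (((k + 1 : ℕ) : ℝ) + D + 1)) ≤ 1 / ((k : ℝ) + D + 1) ^ 2 := by
    intro k
    have hx : (0 : ℝ) ≤ (k : ℝ) + D := by positivity
    have h := key2 ((k : ℝ) + D) hx
    push_cast
    have e1 : (k : ℝ) + 1 + (D : ℝ) + 1 = (k : ℝ) + (D : ℝ) + 2 := by ring
    rw [e1]
    convert h using 3 <;> ring
  have hfnonneg : ∀ k : ℕ,
      0 ≤ 1 / ((k : ℝ) + D + 1) - 1 / (((k + 1 : ℕ) : ℝ) + D + 1) := by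
    intro k
    rw [sub_nonneg]
    apply div_le_div_of_nonneg_left one_pos.le (hfpos k)
    push_cast; linarith
  have hsumf : Summable fun k : ℕ =>
      1 / ((k : ℝ) + D + 1) - 1 / (((k + 1 : ℕ) : ℝ) + D + 1) :=
    Summable.of_nonneg_of_le hfnonneg hfle hsum2
  have hlow : 1 / ((D : ℝ) + 1) ≤ ∑' k : ℕ, 1 / ((k : ℝ) + D + 1) ^ 2 := by
    have h := Summable.tsum_le_tsum hfle hsumf hsum2
    have heq := tsum_telescope_eq (fun k : ℕ => 1 / ((k : ℝ) + D + 1)) hftend hsumf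
    rw [heq] at h
    simpa using h
  -- telescoping function for the upper bound on the degree-4 tail
  have hgtend : Tendsto (fun k : ℕ => 1 / (3 * ((k : ℝ) + D) ^ 3)) atTop (𝓝 0) := by
    simp only [one_div]
    apply Tendsto.comp tendsto_inv_atTop_zero
    apply Tendsto.const_mul_atTop (by norm_num : (0 : ℝ) < 3)
    exact (tendsto_pow_atTop (by norm_num : 3 ≠ 0)).comp
      (tendsto_atTop_add_const_right _ _ tendsto_natCast_atTop_atTop)
  have hgle : ∀ k : ℕ,
      1 / ((k : ℝ) + D + 1) ^ 4 ≤
        1 / (3 * ((k : ℝ) + D) ^ 3) - 1 / (3 * (((k + 1 : ℕ) : ℝ) + D) ^ 3) := by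
    intro k
    have hx : (1 : ℝ) ≤ (k : ℝ) + D := by
      have := Nat.cast_nonneg (α := ℝ) k; linarith
    have h := key4 ((k : ℝ) + D) hx
    push_cast
    have e1 : (k : ℝ) + 1 + (D : ℝ) = (k : ℝ) + (D : ℝ) + 1 := by ring
    rw [e1]
    exact h
  have hgnonneg : ∀ k : ℕ,
      0 ≤ 1 / (3 * ((k : ℝ) + D) ^ 3) - 1 / (3 * (((k + 1 : ℕ) : ℝ) + D) ^ 3) := fun k =>
    le_trans (by positivity) (hgle k)
  have hsumg : Summable fun k : ℕ =>
      1 / (3 * ((k : ℝ) + D) ^ 3) - 1 / (3 * (((k + 1 : ℕ) : ℝ) + D) ^ 3) := by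
    refine Summable.of_nonneg_of_le hgnonneg (fun k => ?_) hsum3
    have h2 : (0 : ℝ) ≤ 1 / (3 * (((k + 1 : ℕ) : ℝ) + D) ^ 3) := by positivity
    linarith
  have hhigh : (∑' k : ℕ, 1 / ((k : ℝ) + D + 1) ^ 4) ≤ 1 / (3 * (D : ℝ) ^ 3) := by
    have h := Summable.tsum_le_tsum hgle hsum4 hsumg
    have heq := tsum_telescope_eq (fun k : ℕ => 1 / (3 * ((k : ℝ) + D) ^ 3)) hgtend hsumg
    rw [heq] at h
    simpa using h
  -- combine
  have hmid : 1 / (3 * (D : ℝ) ^ 3) ≤ 2 / (3 * (D : ℝ) ^ 2) * (1 / ((D : ℝ) + 1)) := by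
    rw [div_mul_div_comm, mul_one, div_le_div_iff₀ (by positivity) (by positivity)]
    nlinarith [hD1, hDpos]
  calc (∑' k : ℕ, 1 / ((k : ℝ) + D + 1) ^ 4) ≤ 1 / (3 * (D : ℝ) ^ 3) := hhigh
    _ ≤ 2 / (3 * (D : ℝ) ^ 2) * (1 / ((D : ℝ) + 1)) := hmid
    _ ≤ 2 / (3 * (D : ℝ) ^ 2) * ∑' k : ℕ, 1 / ((k : ℝ) + D + 1) ^ 2 :=
        mul_le_mul_of_nonneg_left hlow (by positivity)
end
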